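/- For any càdlàg function f : [a,b] → ℝ, the map c ↦ TV^c(f,[a,b]) on (0,∞) is non-increasing, convex and continuous; moreover lim_{c↓0} TV^c(f,[a,b]) = TV(f,[a,b]) (possibly +∞), and TV^c(f,[a,b]) = 0 whenever c ≥ ‖f‖_osc := sup_{s,u∈[a,b]} |f(s) − f(u)|. -/

import Mathlib

open Set Filter

/-- A finite partition `t 0 < t 1 < ... < t n` of points in `[a, b]`. -/
def IsPart (a b : ℝ) (n : ℕ) (t : ℕ → ℝ) : Prop :=
  a ≤ t 0 ∧ t n ≤ b ∧ ∀ i < n, t i < t (i + 1)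

/-- Total variation of `f` on `[a, b]`. -/
noncomputable def TVar {E : Type*} [PseudoMetricSpace E] (f : ℝ → E) (a b : ℝ) : ENNReal :=
  ⨆ (n : ℕ) (t : ℕ → ℝ) (_ : IsPart a b n t),
    ∑ i ∈ Finset.range n, ENNReal.ofReal (dist (f (t (i + 1))) (f (t i)))

/-- Truncated variation of `f` at level `c` on `[a, b]`. -/
noncomputable def TVc {E : Type*} [PseudoMetricSpace E] (f : ℝ → E) (c a b : ℝ) : ENNReal :=
  ⨆ (n : ℕ) (t : ℕ → ℝ) (_ : IsPart a b n t),
    ∑ i ∈ Finset.range n, ENNReal.ofReal (dist (f (t (i + 1))) (f (t i)) - c)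

/-- Upward truncated variation. -/
noncomputable def UTVc (f : ℝ → ℝ) (c a b : ℝ) : ENNReal :=
  ⨆ (n : ℕ) (t : ℕ → ℝ) (_ : IsPart a b n t),
    ∑ i ∈ Finset.range n, ENNReal.ofReal (f (t (i + 1)) - f (t i) - c)

/-- Downward truncated variation. -/
noncomputable def DTVc (f : ℝ → ℝ) (c a b : ℝ) : ENNReal :=
  ⨆ (n : ℕ) (t : ℕ → ℝ) (_ : IsPart a b n t),
    ∑ i ∈ Finset.range n, ENNReal.ofReal (f (t i) - f (t (i + 1)) - c)

/-- `f` is càdlàg on `[a, b]`: right-continuous on `[a, b)`, with left limits on `(a, b]`. -/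
def Cadlag {E : Type*} [TopologicalSpace E] (f : ℝ → E) (a b : ℝ) : Prop :=
  (∀ t ∈ Set.Ico a b, Tendsto f (nhdsWithin t (Set.Ioi t)) (nhds (f t))) ∧
  (∀ t ∈ Set.Ioc a b, ∃ l, Tendsto f (nhdsWithin t (Set.Iio t)) (nhds l))

section Aux

lemma part_mono {n : ℕ} {t : ℕ → ℝ} (h : ∀ i < n, t i < t (i + 1)) :
    ∀ i j, i ≤ j → j ≤ n → t i ≤ t j := by
  intro i j hij hjn
  induction j with
  | zero => simp_all
  | succ m ih =>
    rcases Nat.lt_or_ge i (m+1) with hi | hi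
    · exact le_trans (ih (Nat.lt_succ_iff.mp hi) (le_trans (Nat.le_succ m) hjn))
        (le_of_lt (h m (Nat.lt_of_succ_le hjn)))
    · have : i = m + 1 := le_antisymm hij hi
      simp [this]

lemma part_mem {a b : ℝ} {n : ℕ} {t : ℕ → ℝ} (ht : IsPart a b n t) :
    ∀ i ≤ n, t i ∈ Set.Icc a b := fun i hi =>
  ⟨le_trans ht.1 (part_mono ht.2.2 0 i (Nat.zero_le i) hi),
   le_trans (part_mono ht.2.2 i n hi (le_refl n)) ht.2.1⟩

lemma cover_lemma {k : ℕ} {s : ℕ → ℝ} (hs : ∀ j < k, s j < s (j + 1)) {u : ℝ}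
    (h0 : s 0 ≤ u) (hk : u < s k) : ∃ j < k, s j ≤ u ∧ u < s (j + 1) := by
  induction k with
  | zero => exact absurd (lt_of_le_of_lt h0 hk) (lt_irrefl _)
  | succ m ih =>
    rcases lt_or_ge u (s m) with h | h
    · obtain ⟨j, hj, h1, h2⟩ := ih (fun j hj => hs j (Nat.lt_succ_of_lt hj)) h
      exact ⟨j, Nat.lt_succ_of_lt hj, h1, h2⟩
    · exact ⟨m, Nat.lt_succ_self m, h, hk⟩

lemma sum_sub_le_nat {g : ℕ → ℕ} {n : ℕ} (h : ∀ i < n, g i ≤ g (i + 1)) :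
    ∑ i ∈ Finset.range n, (g (i + 1) - g i) ≤ g n := by
  induction n with
  | zero => simp
  | succ m ih =>
    rw [Finset.sum_range_succ]
    have h1 : ∑ i ∈ Finset.range m, (g (i + 1) - g i) ≤ g m :=
      ih (fun i hi => h i (Nat.lt_succ_of_lt hi))
    have h2 : g m ≤ g (m + 1) := h m (Nat.lt_succ_self m)
    omega

lemma ofReal_max (x : ℝ) : ENNReal.ofReal x = ENNReal.ofReal (max x 0) := by
  rcases le_total x 0 with h | h
  · simp [ENNReal.ofReal_of_nonpos h, max_eq_right h]
  · simp [max_eq_left h]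

lemma sum_ofReal_eq {n : ℕ} (x : ℕ → ℝ) :
    ∑ i ∈ Finset.range n, ENNReal.ofReal (x i)
      = ENNReal.ofReal (∑ i ∈ Finset.range n, max (x i) 0) := by
  rw [ENNReal.ofReal_sum_of_nonneg (fun i _ => le_max_right _ _)]
  exact Finset.sum_congr rfl fun i _ => ofReal_max (x i)

lemma right_osc {a b : ℝ} {f : ℝ → ℝ} (hf : Cadlag f a b) {ε : ℝ} (hε : 0 < ε)
    {y : ℝ} (hy : y ∈ Set.Ico a b) :
    ∃ δ > 0, ∀ u ∈ Set.Ico y (y + δ), ∀ v ∈ Set.Ico y (y + δ), |f u - f v| ≤ ε := by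
  obtain ⟨δ, hδ, hδ'⟩ := (Metric.tendsto_nhdsWithin_nhds.mp (hf.1 y hy)) (ε/2) (by linarith)
  refine ⟨δ, hδ, ?_⟩
  have key : ∀ u ∈ Set.Ico y (y + δ), |f u - f y| ≤ ε / 2 := by
    intro u hu
    rcases eq_or_lt_of_le hu.1 with h | h
    · simp [← h]; linarith
    · have := hδ' (x := u) h (by rw [Real.dist_eq, abs_of_pos (by linarith)]; linarith [hu.2])
      rw [Real.dist_eq] at this
      linarith
  intro u hu v hv
  calc |f u - f v| ≤ |f u - f y| + |f y - f v| := abs_sub_le _ _ _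
    _ ≤ ε / 2 + ε / 2 := by
        have h2 := key v hv
        rw [abs_sub_comm (f y)]
        exact add_le_add (key u hu) h2
    _ = ε := by ring

lemma left_osc {a b : ℝ} {f : ℝ → ℝ} (hf : Cadlag f a b) {ε : ℝ} (hε : 0 < ε)
    {y : ℝ} (hy : y ∈ Set.Ioc a b) :
    ∃ δ > 0, ∀ u ∈ Set.Ico (y - δ) y, ∀ v ∈ Set.Ico (y - δ) y, |f u - f v| ≤ ε := by
  obtain ⟨l, hl⟩ := hf.2 y hy
  obtain ⟨δ, hδ, hδ'⟩ := (Metric.tendsto_nhdsWithin_nhds.mp hl) (ε/2) (by linarith)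
  refine ⟨δ/2, by linarith, ?_⟩
  have key : ∀ u ∈ Set.Ico (y - δ/2) y, |f u - l| ≤ ε / 2 := by
    intro u hu
    have := hδ' (x := u) hu.2
      (by rw [Real.dist_eq, abs_of_neg (by linarith [hu.2])]; linarith [hu.1])
    rw [Real.dist_eq] at this
    linarith
  intro u hu v hv
  calc |f u - f v| ≤ |f u - l| + |l - f v| := abs_sub_le _ _ _
    _ ≤ ε / 2 + ε / 2 := by
        have h2 := key v hv
        rw [abs_sub_comm l]
        exact add_le_add (key u hu) h2
    _ = ε := by ring

lemma exists_osc_part {a b : ℝ} (hab : a < b) {f : ℝ → ℝ} (hf : Cadlag f a b)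
    {ε : ℝ} (hε : 0 < ε) :
    ∃ (k : ℕ) (s : ℕ → ℝ), s 0 = a ∧ s k = b ∧ (∀ j < k, s j < s (j + 1)) ∧
      ∀ j < k, ∀ u ∈ Set.Ico (s j) (s (j + 1)), ∀ v ∈ Set.Ico (s j) (s (j + 1)),
        |f u - f v| ≤ ε := by
  set Good : ℝ → Prop := fun x => ∃ (k : ℕ) (s : ℕ → ℝ), s 0 = a ∧ s k = x ∧
      (∀ j < k, s j < s (j + 1)) ∧
      ∀ j < k, ∀ u ∈ Set.Ico (s j) (s (j + 1)), ∀ v ∈ Set.Ico (s j) (s (j + 1)),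
        |f u - f v| ≤ ε with hGood
  have ext : ∀ x z : ℝ, Good x → x < z →
      (∀ u ∈ Set.Ico x z, ∀ v ∈ Set.Ico x z, |f u - f v| ≤ ε) → Good z := by
    rintro x z ⟨k, s, h0, hk, hmono, hosc⟩ hxz hoz
    refine ⟨k + 1, fun j => if j ≤ k then s j else z, by simp [h0], by simp, ?_, ?_⟩
    · intro j hj
      rcases Nat.lt_succ_iff_lt_or_eq.mp hj with h | h
      · simp only [if_pos (Nat.le_of_lt h), if_pos (Nat.succ_le_of_lt h)]
        exact hmono j h
      · subst h
        simp only [if_pos (le_refl j), if_neg (Nat.not_succ_le_self j), hk]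
        exact hxz
    · intro j hj u hu v hv
      rcases Nat.lt_succ_iff_lt_or_eq.mp hj with h | h
      · simp only [if_pos (Nat.le_of_lt h), if_pos (Nat.succ_le_of_lt h)] at hu hv
        exact hosc j h u hu v hv
      · subst h
        simp only [if_pos (le_refl j), if_neg (Nat.not_succ_le_self j), hk] at hu hv
        exact hoz u hu v hv
  have ha_good : Good a := ⟨0, fun _ => a, rfl, rfl, by simp, by simp⟩
  have haS : a ∈ {x : ℝ | x ∈ Set.Icc a b ∧ Good x} :=
    ⟨⟨le_refl a, le_of_lt hab⟩, ha_good⟩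
  set S := {x : ℝ | x ∈ Set.Icc a b ∧ Good x} with hS
  have hSne : S.Nonempty := ⟨a, haS⟩
  have hbdd : BddAbove S := ⟨b, fun x hx => hx.1.2⟩
  set c := sSup S with hc
  have hca : a ≤ c := le_csSup hbdd haS
  have hcb : c ≤ b := csSup_le hSne (fun x hx => hx.1.2)
  have hac : a < c := by
    obtain ⟨δ, hδ, hosc⟩ := right_osc hf hε (y := a) ⟨le_refl a, hab⟩
    set x := min (a + δ/2) ((a + b)/2) with hx
    have hax : a < x := lt_min (by linarith) (by linarith)
    have hxb : x ≤ b := le_trans (min_le_right _ _) (by linarith)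
    have hgx : Good x := ext a x ha_good hax (fun u hu v hv =>
      hosc u ⟨hu.1, lt_of_lt_of_le hu.2 (le_trans (min_le_left _ _) (by linarith))⟩
             v ⟨hv.1, lt_of_lt_of_le hv.2 (le_trans (min_le_left _ _) (by linarith))⟩)
    exact lt_of_lt_of_le hax (le_csSup hbdd ⟨⟨le_of_lt hax, hxb⟩, hgx⟩)
  have hgc : Good c := by
    obtain ⟨δ, hδ, hosc⟩ := left_osc hf hε (y := c) ⟨hac, hcb⟩
    obtain ⟨t, htS, ht⟩ := exists_lt_of_lt_csSup hSne (show c - δ < c by linarith)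
    have htc : t ≤ c := le_csSup hbdd htS
    rcases eq_or_lt_of_le htc with h | h
    · rw [← h]; exact htS.2
    · exact ext t c htS.2 h (fun u hu v hv =>
        hosc u ⟨le_trans (by linarith) hu.1, hu.2⟩ v ⟨le_trans (by linarith) hv.1, hv.2⟩)
  have hcbe : c = b := by
    by_contra h
    have hcb' : c < b := lt_of_le_of_ne hcb h
    obtain ⟨δ, hδ, hosc⟩ := right_osc hf hε (y := c) ⟨hca, hcb'⟩
    set x := min (c + δ/2) ((c + b)/2) with hx
    have hcx : c < x := lt_min (by linarith) (by linarith)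
    have hxb : x ≤ b := le_trans (min_le_right _ _) (by linarith)
    have hgx : Good x := ext c x hgc hcx (fun u hu v hv =>
      hosc u ⟨hu.1, lt_of_lt_of_le hu.2 (le_trans (min_le_left _ _) (by linarith))⟩
             v ⟨hv.1, lt_of_lt_of_le hv.2 (le_trans (min_le_left _ _) (by linarith))⟩)
    exact absurd (le_csSup hbdd ⟨⟨le_trans hca (le_of_lt hcx), hxb⟩, hgx⟩)
      (not_le_of_gt hcx)
  rw [hcbe] at hgc
  exact hgc

lemma tvc_ne_top {a b : ℝ} (hab : a < b) {f : ℝ → ℝ} (hf : Cadlag f a b)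
    {c : ℝ} (hc : 0 < c) : TVc f c a b ≠ ⊤ := by
  obtain ⟨k, s, h0, hk, hmono, hosc⟩ := exists_osc_part hab hf hc
  obtain ⟨Mx, hmax⟩ : ∃ Mx : ℝ, ∀ j ≤ k, |f (s j)| ≤ Mx := by
    use (Finset.range (k+1)).sup' Finset.nonempty_range_add_one (fun j => |f (s j)|)
    intro j hj
    exact Finset.le_sup' (fun j => |f (s j)|)
      (Finset.mem_range.mpr (Nat.lt_succ_of_le hj))
  set M := Mx + c with hM
  have hbound : ∀ u ∈ Set.Icc a b, |f u| ≤ M := by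
    intro u hu
    rcases eq_or_lt_of_le hu.2 with h | h
    · rw [h, ← hk]
      have := hmax k (le_refl k)
      linarith
    · obtain ⟨j, hj, h1, h2⟩ := cover_lemma hmono (h0 ▸ hu.1) (hk ▸ h)
      have ho := hosc j hj u ⟨h1, h2⟩ (s j) ⟨le_refl _, hmono j hj⟩
      have hm := hmax j (le_of_lt hj)
      have htri : |f u| ≤ |f u - f (s j)| + |f (s j)| := by
        have := abs_add_le (f u - f (s j)) (f (s j))
        simpa using this
      linarith
  set J : ℝ → ℕ := fun x => ((Finset.range (k+1)).filter (fun j => s j ≤ x)).card with hJ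
  have hJmono : ∀ x y : ℝ, x ≤ y → J x ≤ J y := by
    intro x y hxy
    apply Finset.card_le_card
    intro j hj
    simp only [Finset.mem_filter] at *
    exact ⟨hj.1, hj.2.trans hxy⟩
  have hJle : ∀ x, J x ≤ k + 1 := fun x =>
    le_trans (Finset.card_filter_le _ _) (by simp)
  have hJkey : ∀ x ∈ Set.Icc a b, ∀ y ∈ Set.Icc a b, x ≤ y → J x = J y →
      |f x - f y| ≤ c := by
    intro x hx y hy hxy hJxy
    rcases le_or_gt (s k) x with h | h
    · have hxb : x = b := le_antisymm hx.2 (hk ▸ h)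
      have hyb : y = b := le_antisymm hy.2 (le_trans (hk ▸ h) hxy)
      rw [hxb, hyb, sub_self, abs_zero]
      exact le_of_lt hc
    · obtain ⟨j, hj, h1, h2⟩ := cover_lemma hmono (h0 ▸ hx.1) (hk ▸ h)
      have hylt : y < s (j+1) := by
        by_contra hy'
        push_neg at hy'
        have hsub : (Finset.range (k+1)).filter (fun i => s i ≤ x)
            ⊆ (Finset.range (k+1)).filter (fun i => s i ≤ y) := by
          intro i hi
          simp only [Finset.mem_filter] at *
          exact ⟨hi.1, hi.2.trans hxy⟩
        have hmem : j + 1 ∈ (Finset.range (k+1)).filter (fun i => s i ≤ y) := by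
          simp only [Finset.mem_filter, Finset.mem_range]
          exact ⟨by omega, hy'⟩
        have hnmem : j + 1 ∉ (Finset.range (k+1)).filter (fun i => s i ≤ x) := by
          simp only [Finset.mem_filter, Finset.mem_range]
          rintro ⟨-, hle⟩
          exact absurd h2 (not_lt_of_ge hle)
        have hss := Finset.card_lt_card
          ((Finset.ssubset_iff_of_subset hsub).mpr ⟨j+1, hmem, hnmem⟩)
        exact absurd hJxy (ne_of_lt hss)
      exact hosc j hj x ⟨h1, h2⟩ y ⟨le_trans h1 hxy, hylt⟩
  refine ne_top_of_le_ne_top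
    (show ((k+1 : ℕ) : ENNReal) * ENNReal.ofReal (2*M) ≠ ⊤ from
      ENNReal.mul_ne_top (by simp) ENNReal.ofReal_ne_top) ?_
  refine iSup_le fun n => iSup_le fun t => iSup_le fun ht => ?_
  have htmem := part_mem ht
  set g : ℕ → ℕ := fun i => J (t i) with hg
  have hgm : ∀ i < n, g i ≤ g (i+1) := fun i hi => hJmono _ _ (le_of_lt (ht.2.2 i hi))
  calc ∑ i ∈ Finset.range n, ENNReal.ofReal (dist (f (t (i+1))) (f (t i)) - c)
      ≤ ∑ i ∈ Finset.range n, ((g (i+1) - g i : ℕ) : ENNReal) * ENNReal.ofReal (2*M) := by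
        refine Finset.sum_le_sum fun i hi => ?_
        have hi' := Finset.mem_range.mp hi
        rcases eq_or_lt_of_le (hgm i hi') with he | hlt
        · have hkey : |f (t i) - f (t (i+1))| ≤ c :=
            hJkey _ (htmem i (le_of_lt hi')) _ (htmem (i+1) hi')
              (le_of_lt (ht.2.2 i hi')) he
          have hd : dist (f (t (i+1))) (f (t i)) - c ≤ 0 := by
            rw [Real.dist_eq, abs_sub_comm]; linarith
          simp [ENNReal.ofReal_of_nonpos hd]
        · have h1 : (1 : ENNReal) ≤ ((g (i+1) - g i : ℕ) : ENNReal) := by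
            have : 1 ≤ g (i+1) - g i := by omega
            exact_mod_cast this
          calc ENNReal.ofReal (dist (f (t (i+1))) (f (t i)) - c)
              ≤ ENNReal.ofReal (2*M) := by
                apply ENNReal.ofReal_le_ofReal
                have h2 := hbound _ (htmem (i+1) hi')
                have h3 := hbound _ (htmem i (le_of_lt hi'))
                rw [Real.dist_eq]
                have htri : |f (t (i+1)) - f (t i)| ≤ |f (t (i+1))| + |f (t i)| :=
                  abs_sub _ _
                linarith
            _ ≤ ((g (i+1) - g i : ℕ) : ENNReal) * ENNReal.ofReal (2*M) := by
                conv_lhs => rw [← one_mul (ENNReal.ofReal (2*M))]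
                exact mul_le_mul' h1 le_rfl
    _ = ((∑ i ∈ Finset.range n, (g (i+1) - g i) : ℕ) : ENNReal) * ENNReal.ofReal (2*M) := by
        rw [← Finset.sum_mul]
        norm_cast
    _ ≤ ((k+1 : ℕ) : ENNReal) * ENNReal.ofReal (2*M) := by
        apply mul_le_mul' _ le_rfl
        exact_mod_cast le_trans (sum_sub_le_nat hgm) (hJle (t n))

lemma tvc_anti {f : ℝ → ℝ} {a b c₁ c₂ : ℝ} (h : c₁ ≤ c₂) :
    TVc f c₂ a b ≤ TVc f c₁ a b := by
  refine iSup_le fun n => iSup_le fun t => iSup_le fun ht => ?_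
  refine le_iSup_of_le n (le_iSup_of_le t (le_iSup_of_le ht ?_))
  exact Finset.sum_le_sum fun i _ => ENNReal.ofReal_le_ofReal (by linarith)

lemma tvc_le_tvar {f : ℝ → ℝ} {a b c : ℝ} (h : 0 ≤ c) :
    TVc f c a b ≤ TVar f a b := by
  refine iSup_le fun n => iSup_le fun t => iSup_le fun ht => ?_
  refine le_iSup_of_le n (le_iSup_of_le t (le_iSup_of_le ht ?_))
  exact Finset.sum_le_sum fun i _ => ENNReal.ofReal_le_ofReal (by linarith)

end Aux

/-- `c ↦ TV^c(f,[a,b])` is non-increasing, convex and continuous on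
`(0, ∞)`; `TV^c(f,[a,b]) → TV(f,[a,b])` (possibly `+∞`) as `c ↓ 0`; and
`TV^c(f,[a,b]) = 0` whenever `c` dominates the oscillation of `f` on `[a, b]`. -/
theorem tvc_properties_in_c (a b : ℝ) (hab : a < b) (f : ℝ → ℝ)
    (hf : Cadlag f a b) :
    AntitoneOn (fun c => (TVc f c a b).toReal) (Set.Ioi (0 : ℝ)) ∧
    ConvexOn ℝ (Set.Ioi (0 : ℝ)) (fun c => (TVc f c a b).toReal) ∧
    ContinuousOn (fun c => (TVc f c a b).toReal) (Set.Ioi (0 : ℝ)) ∧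
    Tendsto (fun c => TVc f c a b) (nhdsWithin 0 (Set.Ioi 0)) (nhds (TVar f a b)) ∧
    (∀ c : ℝ, (∀ s ∈ Set.Icc a b, ∀ u ∈ Set.Icc a b, |f s - f u| ≤ c) →
      TVc f c a b = 0) := by
  have hne : ∀ c : ℝ, 0 < c → TVc f c a b ≠ ⊤ := fun c hc => tvc_ne_top hab hf hc
  have hAnt : AntitoneOn (fun c => (TVc f c a b).toReal) (Set.Ioi (0 : ℝ)) := by
    intro x hx y _ hxy
    exact ENNReal.toReal_mono (hne x hx) (tvc_anti hxy)
  have key_sum : ∀ (n : ℕ) (t : ℕ → ℝ) (c : ℝ),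
      ∑ i ∈ Finset.range n, ENNReal.ofReal (dist (f (t (i+1))) (f (t i)) - c)
        = ENNReal.ofReal
            (∑ i ∈ Finset.range n, max (dist (f (t (i+1))) (f (t i)) - c) 0) :=
    fun n t c => sum_ofReal_eq _
  have hSle : ∀ (n : ℕ) (t : ℕ → ℝ), IsPart a b n t → ∀ c : ℝ, 0 < c →
      ∑ i ∈ Finset.range n, max (dist (f (t (i+1))) (f (t i)) - c) 0
        ≤ (TVc f c a b).toReal := by
    intro n t ht c hc
    have h1 : ENNReal.ofReal
        (∑ i ∈ Finset.range n, max (dist (f (t (i+1))) (f (t i)) - c) 0)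
          ≤ TVc f c a b := by
      rw [← key_sum]
      exact le_iSup_of_le n (le_iSup_of_le t (le_iSup_of_le ht le_rfl))
    have h2 := ENNReal.toReal_mono (hne c hc) h1
    rwa [ENNReal.toReal_ofReal (Finset.sum_nonneg fun i _ => le_max_right _ _)] at h2
  have hConv : ConvexOn ℝ (Set.Ioi (0 : ℝ)) (fun c => (TVc f c a b).toReal) := by
    refine ⟨convex_Ioi 0, ?_⟩
    intro x hx y hy p q hp hq hpq
    simp only [smul_eq_mul]
    have hx0 : (0:ℝ) < x := hx
    have hy0 : (0:ℝ) < y := hy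
    have hrhs : 0 ≤ p * (TVc f x a b).toReal + q * (TVc f y a b).toReal := by
      have := ENNReal.toReal_nonneg (a := TVc f x a b)
      have := ENNReal.toReal_nonneg (a := TVc f y a b)
      positivity
    refine ENNReal.toReal_le_of_le_ofReal hrhs ?_
    refine iSup_le fun n => iSup_le fun t => iSup_le fun ht => ?_
    rw [key_sum]
    apply ENNReal.ofReal_le_ofReal
    calc ∑ i ∈ Finset.range n, max (dist (f (t (i+1))) (f (t i)) - (p*x+q*y)) 0
        ≤ p * (∑ i ∈ Finset.range n, max (dist (f (t (i+1))) (f (t i)) - x) 0)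
          + q * (∑ i ∈ Finset.range n, max (dist (f (t (i+1))) (f (t i)) - y) 0) := by
          rw [Finset.mul_sum, Finset.mul_sum, ← Finset.sum_add_distrib]
          refine Finset.sum_le_sum fun i _ => ?_
          refine max_le ?_ (by positivity)
          have h1 : dist (f (t (i+1))) (f (t i)) - (p*x+q*y)
              = p * (dist (f (t (i+1))) (f (t i)) - x)
                + q * (dist (f (t (i+1))) (f (t i)) - y) := by
            linear_combination (-(dist (f (t (i+1))) (f (t i)))) * hpq
          rw [h1]
          exact add_le_add (mul_le_mul_of_nonneg_left (le_max_left _ _) hp)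
            (mul_le_mul_of_nonneg_left (le_max_left _ _) hq)
      _ ≤ _ := add_le_add (mul_le_mul_of_nonneg_left (hSle n t ht x hx0) hp)
            (mul_le_mul_of_nonneg_left (hSle n t ht y hy0) hq)
  have hCont := hConv.continuousOn isOpen_Ioi
  have hTend : Tendsto (fun c => TVc f c a b) (nhdsWithin 0 (Set.Ioi 0))
      (nhds (TVar f a b)) := by
    refine tendsto_order.mpr ⟨?_, ?_⟩
    · intro l hl
      simp only [TVar] at hl
      obtain ⟨n, hn⟩ := lt_iSup_iff.mp hl
      obtain ⟨t, htn⟩ := lt_iSup_iff.mp hn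
      obtain ⟨ht, hlt⟩ := lt_iSup_iff.mp htn
      have hcont : Continuous (fun c : ℝ =>
          ∑ i ∈ Finset.range n, ENNReal.ofReal (dist (f (t (i+1))) (f (t i)) - c)) := by
        apply continuous_finset_sum
        intro i _
        exact ENNReal.continuous_ofReal.comp (by continuity)
      have htend : Tendsto (fun c : ℝ =>
          ∑ i ∈ Finset.range n, ENNReal.ofReal (dist (f (t (i+1))) (f (t i)) - c))
          (nhdsWithin 0 (Set.Ioi 0))
          (nhds (∑ i ∈ Finset.range n, ENNReal.ofReal (dist (f (t (i+1))) (f (t i))))) := by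
        have h0 := (hcont.tendsto 0).mono_left (nhdsWithin_le_nhds (s := Set.Ioi (0:ℝ)))
        simpa using h0
      have hev := htend.eventually (eventually_gt_nhds hlt)
      refine hev.mono fun c hc' => lt_of_lt_of_le hc' ?_
      exact le_iSup_of_le n (le_iSup_of_le t (le_iSup_of_le ht le_rfl))
    · intro u hu
      refine eventually_nhdsWithin_of_forall fun c hc =>
        lt_of_le_of_lt (tvc_le_tvar (le_of_lt hc)) hu
  have hZero : ∀ c : ℝ, (∀ s ∈ Set.Icc a b, ∀ u ∈ Set.Icc a b, |f s - f u| ≤ c) →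
      TVc f c a b = 0 := by
    intro c hcb
    refine le_antisymm ?_ (zero_le)
    refine iSup_le fun n => iSup_le fun t => iSup_le fun ht => le_of_eq ?_
    have htmem := part_mem ht
    refine Finset.sum_eq_zero fun i hi => ?_
    have hi' := Finset.mem_range.mp hi
    have hd := hcb _ (htmem (i+1) hi') _ (htmem i (le_of_lt hi'))
    rw [ENNReal.ofReal_eq_zero, Real.dist_eq]
    linarith
  exact ⟨hAnt, hConv, hCont, hTend, hZero⟩
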